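/- For a complex matrix M and an irreducible nonnegative matrix B of the same size with |M| ≤ B entrywise and strict inequality in at least one entry, spr(M) < spr(B). -/

import Mathlib

open Matrix

/-- The spectral radius of a complex square matrix: the maximum modulus of its
eigenvalues (elements of its spectrum). -/
noncomputable def spr {n : Type*} [Fintype n] [DecidableEq n] (A : Matrix n n ℂ) : ℝ :=
  sSup ((fun z : ℂ => ‖z‖) '' spectrum ℂ A)

namespace SprAux
open Polynomial

variable {n : Type*} [Fintype n] [DecidableEq n]

lemma charpoly_eval (A : Matrix n n ℂ) (μ : ℂ) :
    A.charpoly.eval μ = (μ • (1 : Matrix n n ℂ) - A).det := by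
  rw [Matrix.charpoly, ← coe_evalRingHom, RingHom.map_det]
  congr 1
  ext i j
  by_cases h : i = j <;>
    simp [h, charmatrix_apply_eq, charmatrix_apply_ne, Matrix.one_apply, Matrix.sub_apply,
      Matrix.smul_apply]

lemma spectrum_eq (A : Matrix n n ℂ) : spectrum ℂ A = {μ | A.charpoly.IsRoot μ} := by
  ext μ
  rw [spectrum.mem_iff, Matrix.isUnit_iff_isUnit_det, isUnit_iff_ne_zero, not_not]
  simp only [Set.mem_setOf_eq, IsRoot, charpoly_eval, Algebra.algebraMap_eq_smul_one]

lemma spectrum_finite (A : Matrix n n ℂ) : (spectrum ℂ A).Finite := by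
  rw [spectrum_eq]
  exact Polynomial.finite_setOf_isRoot A.charpoly_monic.ne_zero

lemma abs_le_spr {A : Matrix n n ℂ} {μ : ℂ} (h : μ ∈ spectrum ℂ A) :
    ‖μ‖ ≤ spr A :=
  le_csSup ((spectrum_finite A).image _).bddAbove ⟨μ, h, rfl⟩

lemma exists_max_eig [Nonempty n] (A : Matrix n n ℂ) :
    ∃ μ ∈ spectrum ℂ A, ‖μ‖ = spr A := by
  have hne : (spectrum ℂ A).Nonempty :=
    spectrum.nonempty_of_isAlgClosed_of_finiteDimensional ℂ A
  have hmem : spr A ∈ (fun z : ℂ => ‖z‖) '' spectrum ℂ A :=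
    Set.Nonempty.csSup_mem (hne.image _) ((spectrum_finite A).image _)
  obtain ⟨μ, hμ, hab⟩ := hmem
  exact ⟨μ, hμ, hab⟩

lemma spr_nonneg [Nonempty n] (A : Matrix n n ℂ) : 0 ≤ spr A := by
  obtain ⟨μ, -, h⟩ := exists_max_eig A
  exact h ▸ norm_nonneg μ

variable (B : Matrix n n ℝ)

lemma pow_nonneg (hnn : ∀ i j, 0 ≤ B i j) (k : ℕ) : ∀ i j, 0 ≤ (B ^ k) i j := by
  induction k with
  | zero => intro i j; by_cases h : i = j <;> simp [pow_zero, Matrix.one_apply, h]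
  | succ k ih =>
    intro i j
    rw [pow_succ, Matrix.mul_apply]
    exact Finset.sum_nonneg fun l _ => mul_nonneg (ih i l) (hnn l j)

lemma one_add_nonneg (hnn : ∀ i j, 0 ≤ B i j) : ∀ i j, 0 ≤ (1 + B) i j := by
  intro i j
  have : (0 : ℝ) ≤ (1 : Matrix n n ℝ) i j := by
    by_cases h : i = j <;> simp [Matrix.one_apply, h]
  simpa [Matrix.add_apply] using add_nonneg this (hnn i j)

lemma one_add_pow_diag (hnn : ∀ i j, 0 ≤ B i j) (t : ℕ) :
    ∀ i, 1 ≤ ((1 + B) ^ t) i i := by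
  induction t with
  | zero => intro i; simp
  | succ t ih =>
    intro i
    rw [pow_succ, Matrix.mul_apply]
    calc (1 : ℝ) = 1 * 1 := (one_mul 1).symm
    _ ≤ ((1 + B) ^ t) i i * (1 + B) i i := by
        apply mul_le_mul (ih i) ?_ zero_le_one
          ((zero_le_one.trans (ih i)))
        simpa [Matrix.add_apply, Matrix.one_apply] using hnn i i
    _ ≤ ∑ l, ((1 + B) ^ t) i l * (1 + B) l i := by
        apply Finset.single_le_sum (f := fun l => ((1 + B) ^ t) i l * (1 + B) l i)
          (fun l _ => mul_nonneg (pow_nonneg _ (one_add_nonneg B hnn) t i l)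
            (one_add_nonneg B hnn l i)) (Finset.mem_univ i)

lemma pow_le_one_add_pow (hnn : ∀ i j, 0 ≤ B i j) (t : ℕ) :
    ∀ i j, (B ^ t) i j ≤ ((1 + B) ^ t) i j := by
  induction t with
  | zero => intro i j; simp
  | succ t ih =>
    intro i j
    rw [pow_succ, pow_succ, Matrix.mul_apply, Matrix.mul_apply]
    apply Finset.sum_le_sum
    intro l _
    apply mul_le_mul (ih i l) ?_ (hnn l j) (pow_nonneg _ (one_add_nonneg B hnn) t i l)
    simp only [Matrix.add_apply]
    nlinarith [hnn l j, (by by_cases h : l = j <;> simp [Matrix.one_apply, h] :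
      (0:ℝ) ≤ (1 : Matrix n n ℝ) l j)]

/-- Irreducibility gives a single power of `1 + B` with all entries positive. -/
lemma exists_pos_pow (hnn : ∀ i j, 0 ≤ B i j)
    (hirr : ∀ i j, ∃ k : ℕ, 0 < k ∧ 0 < (B ^ k) i j) :
    ∃ m : ℕ, ∀ i j, 0 < ((1 + B) ^ m) i j := by
  choose k hk0 hkpos using hirr
  refine ⟨∑ i, ∑ j, k i j, fun i j => ?_⟩
  set m := ∑ i, ∑ j, k i j with hm
  have hkm : k i j ≤ m := by
    calc k i j ≤ ∑ j', k i j' :=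
          Finset.single_le_sum (f := fun j' => k i j') (fun _ _ => Nat.zero_le _)
            (Finset.mem_univ j)
    _ ≤ m := Finset.single_le_sum (f := fun i' => ∑ j', k i' j') (fun _ _ => Nat.zero_le _)
          (Finset.mem_univ i)
  have h1 : (1 + B) ^ m = (1 + B) ^ (m - k i j) * (1 + B) ^ (k i j) := by
    rw [← pow_add, Nat.sub_add_cancel hkm]
  rw [h1, Matrix.mul_apply]
  have hterm : 0 < ((1 + B) ^ (m - k i j)) i i * ((1 + B) ^ (k i j)) i j := by
    apply mul_pos (lt_of_lt_of_le one_pos (one_add_pow_diag B hnn _ i))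
    exact lt_of_lt_of_le (hkpos i j) (pow_le_one_add_pow B hnn _ i j)
  calc (0:ℝ) < ((1 + B) ^ (m - k i j)) i i * ((1 + B) ^ (k i j)) i j := hterm
  _ ≤ ∑ l, ((1 + B) ^ (m - k i j)) i l * ((1 + B) ^ (k i j)) l j :=
      Finset.single_le_sum (f := fun l => ((1 + B) ^ (m - k i j)) i l * ((1 + B) ^ (k i j)) l j)
        (fun l _ => mul_nonneg (pow_nonneg _ (one_add_nonneg B hnn) _ i l)
          (pow_nonneg _ (one_add_nonneg B hnn) _ l j)) (Finset.mem_univ i)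

/-- Trace bound: for `N ≥ 1`, `trace (B ^ N) ≤ card n * spr (B_ℂ) ^ N`. -/
lemma trace_pow_le [Nonempty n] (N : ℕ) (hN : 0 < N) :
    Matrix.trace (B ^ N) ≤ (Fintype.card n : ℝ) * spr (B.map Complex.ofReal) ^ N := by
  set A : Matrix n n ℂ := B.map Complex.ofReal with hA
  set R := spr A with hR
  have hR0 : 0 ≤ R := spr_nonneg A
  have hmap : (A ^ N) = (B ^ N).map Complex.ofReal := by
    exact (map_pow (Complex.ofRealHom.mapMatrix) B N).symm
  -- complex trace equals sum of charpoly roots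
  have htr : (A ^ N).trace = ((A ^ N).charpoly.roots).sum :=
    Matrix.trace_eq_sum_roots_charpoly (A ^ N)
  -- each root has modulus ≤ R ^ N
  have hroot : ∀ μ ∈ (A ^ N).charpoly.roots, ‖μ‖ ≤ R ^ N := by
    intro μ hμ
    have hμspec : μ ∈ spectrum ℂ (A ^ N) := by
      rw [spectrum_eq]
      exact isRoot_of_mem_roots hμ
    rw [spectrum.map_pow_of_pos A hN] at hμspec
    obtain ⟨ν, hν, rfl⟩ := hμspec
    calc ‖ν ^ N‖ = ‖ν‖ ^ N := norm_pow _ _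
    _ ≤ R ^ N := pow_le_pow_left₀ (norm_nonneg ν) (abs_le_spr hν) N
  -- bound the sum
  have hcard : (Multiset.card (A ^ N).charpoly.roots : ℝ) ≤ (Fintype.card n : ℝ) := by
    exact_mod_cast le_trans (Polynomial.card_roots' _)
      (le_of_eq ((A ^ N).charpoly_natDegree_eq_dim))
  have habs : ‖(A ^ N).charpoly.roots.sum‖ ≤ (Fintype.card n : ℝ) * R ^ N := by
    calc ‖(A ^ N).charpoly.roots.sum‖
        = ‖(A ^ N).charpoly.roots.sum‖ := rfl
    _ ≤ ((A ^ N).charpoly.roots.map (fun z => ‖z‖)).sum := norm_multiset_sum_le _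
    _ ≤ (Multiset.card ((A ^ N).charpoly.roots.map (fun z => ‖z‖))) • (R ^ N) := by
        apply Multiset.sum_le_card_nsmul
        intro x hx
        obtain ⟨μ, hμ, rfl⟩ := Multiset.mem_map.mp hx
        exact hroot μ hμ
    _ = (Multiset.card (A ^ N).charpoly.roots : ℝ) * R ^ N := by
        rw [Multiset.card_map, nsmul_eq_mul]
    _ ≤ (Fintype.card n : ℝ) * R ^ N := by
        apply mul_le_mul_of_nonneg_right hcard (_root_.pow_nonneg hR0 N)
  -- transfer to the real trace
  have htrmap : (A ^ N).trace = Complex.ofReal ((B ^ N).trace) := by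
    rw [hmap]
    simp [Matrix.trace, Matrix.map_apply]
  have : ‖Complex.ofReal ((B ^ N).trace)‖ ≤ (Fintype.card n : ℝ) * R ^ N := by
    rw [← htrmap, htr]; exact habs
  calc (B ^ N).trace ≤ |(B ^ N).trace| := le_abs_self _
  _ = ‖Complex.ofReal ((B ^ N).trace)‖ := by rw [Complex.norm_real, Real.norm_eq_abs]
  _ ≤ _ := this


/-- Growth lemma: if `s • y ≤ B *ᵥ y` with `y` strictly positive and `s > 0`,
and `B` is nonnegative irreducible, then `s ≤ spr (B_ℂ)`. -/
lemma le_spr_of_subinvariant [Nonempty n] (hnn : ∀ i j, 0 ≤ B i j)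
    (hirr : ∀ i j, ∃ k : ℕ, 0 < k ∧ 0 < (B ^ k) i j)
    {s : ℝ} (hs : 0 < s) {y : n → ℝ} (hy : ∀ i, 0 < y i)
    (hsub : ∀ i, s * y i ≤ (B *ᵥ y) i) :
    s ≤ spr (B.map Complex.ofReal) := by
  set R := spr (B.map Complex.ofReal) with hRdef
  have hR0 : 0 ≤ R := spr_nonneg _
  by_contra hcon
  push_neg at hcon   -- R < s
  -- iterate the subinvariance
  have step1 : ∀ k : ℕ, ∀ i, s ^ k * y i ≤ ((B ^ k) *ᵥ y) i := by
    intro k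
    induction k with
    | zero => intro i; simp [Matrix.one_mulVec]
    | succ k ih =>
      intro i
      have hmono : ∀ i, ((B ^ k) *ᵥ (fun j => s * y j)) i ≤ ((B ^ k) *ᵥ (B *ᵥ y)) i := by
        intro i
        simp only [Matrix.mulVec, dotProduct]
        exact Finset.sum_le_sum fun j _ =>
          mul_le_mul_of_nonneg_left (hsub j) (pow_nonneg B hnn k i j)
      have h1 : s ^ (k + 1) * y i = s * (s ^ k * y i) := by ring
      have h2 : ((B ^ k) *ᵥ (fun j => s * y j)) i = s * ((B ^ k) *ᵥ y) i := by
        have : (fun j => s * y j) = s • y := by funext j; simp [Pi.smul_apply, smul_eq_mul]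
        rw [this, Matrix.mulVec_smul]; simp [Pi.smul_apply, smul_eq_mul]
      have h3 : ((B ^ k) *ᵥ (B *ᵥ y)) i = ((B ^ (k + 1)) *ᵥ y) i := by
        rw [Matrix.mulVec_mulVec, ← pow_succ]
      calc s ^ (k + 1) * y i = s * (s ^ k * y i) := h1
      _ ≤ s * (((B ^ k) *ᵥ y) i) := by
          exact mul_le_mul_of_nonneg_left (ih i) hs.le
      _ = ((B ^ k) *ᵥ (fun j => s * y j)) i := (h2).symm
      _ ≤ ((B ^ k) *ᵥ (B *ᵥ y)) i := hmono i
      _ = ((B ^ (k + 1)) *ᵥ y) i := h3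
  -- extremal values of y
  obtain ⟨i0, -, hi0⟩ := Finset.exists_min_image Finset.univ y Finset.univ_nonempty
  obtain ⟨i1, -, hi1⟩ := Finset.exists_max_image Finset.univ y Finset.univ_nonempty
  set c := y i0 with hc
  set Y := y i1 with hY
  have hc0 : 0 < c := hy i0
  have hY0 : 0 < Y := hy i1
  -- total sum of entries of B ^ k
  set S : ℕ → ℝ := fun k => ∑ i, ∑ j, (B ^ k) i j with hS
  have hSnn : ∀ k, 0 ≤ S k := fun k =>
    Finset.sum_nonneg fun i _ => Finset.sum_nonneg fun j _ => pow_nonneg B hnn k i j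
  have step2 : ∀ k, s ^ k * c ≤ S k * Y := by
    intro k
    calc s ^ k * c ≤ ((B ^ k) *ᵥ y) i0 := step1 k i0
    _ = ∑ j, (B ^ k) i0 j * y j := by simp [Matrix.mulVec, dotProduct]
    _ ≤ ∑ j, (B ^ k) i0 j * Y := Finset.sum_le_sum fun j _ =>
        mul_le_mul_of_nonneg_left (hi1 j (Finset.mem_univ j)) (pow_nonneg B hnn k i0 j)
    _ = (∑ j, (B ^ k) i0 j) * Y := by rw [Finset.sum_mul]
    _ ≤ S k * Y := by
        apply mul_le_mul_of_nonneg_right ?_ hY0.le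
        exact Finset.single_le_sum (f := fun i => ∑ j, (B ^ k) i j)
          (fun i _ => Finset.sum_nonneg fun j _ => pow_nonneg B hnn k i j) (Finset.mem_univ i0)
  -- the positive power of 1 + B
  obtain ⟨m, hP⟩ := exists_pos_pow B hnn hirr
  set P := (1 + B) ^ m with hPdef
  obtain ⟨p, -, hpmin⟩ := Finset.exists_min_image (Finset.univ ×ˢ Finset.univ)
    (fun q : n × n => P q.1 q.2) (Finset.univ_nonempty)
  set β := P p.1 p.2 with hβ
  have hβ0 : 0 < β := hP p.1 p.2
  have hβle : ∀ i j, β ≤ P i j := fun i j =>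
    hpmin (i, j) (Finset.mem_product.mpr ⟨Finset.mem_univ i, Finset.mem_univ j⟩)
  -- step3 : β * S k ≤ trace (P * B ^ k)
  have step3 : ∀ k, β * S k ≤ Matrix.trace (P * B ^ k) := by
    intro k
    have htr : Matrix.trace (P * B ^ k) = ∑ i, ∑ j, P i j * (B ^ k) j i := by
      simp [Matrix.trace, Matrix.diag_apply, Matrix.mul_apply]
    have hSalt : β * S k = ∑ i, ∑ j, β * (B ^ k) j i := by
      rw [hS, Finset.mul_sum, Finset.sum_comm]
      congr 1; funext i; rw [Finset.mul_sum]
    rw [htr, hSalt]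
    exact Finset.sum_le_sum fun i _ => Finset.sum_le_sum fun j _ =>
      mul_le_mul_of_nonneg_right (hβle i j) (pow_nonneg B hnn k j i)
  -- expand P * B ^ k and bound via the trace estimate
  set K : ℝ := (∑ t ∈ Finset.range (m + 1), (m.choose t : ℝ)) * (Fintype.card n : ℝ) *
      (max 1 R ^ m) with hK
  have hK0 : 0 < K := by
    rw [hK]
    have h1 : (0:ℝ) < ∑ t ∈ Finset.range (m + 1), (m.choose t : ℝ) := by
      apply Finset.sum_pos (fun t ht => ?_) ⟨0, Finset.mem_range.mpr (Nat.succ_pos m)⟩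
      exact_mod_cast Nat.choose_pos (Nat.lt_succ_iff.mp (Finset.mem_range.mp ht))
    have h2 : (0:ℝ) < (Fintype.card n : ℝ) := by exact_mod_cast Fintype.card_pos
    positivity
  have step4 : ∀ k : ℕ, 0 < k → β * S k ≤ K * R ^ k := by
    intro k hk
    have hexp : P * B ^ k = ∑ t ∈ Finset.range (m + 1), (m.choose t) • B ^ (m - t + k) := by
      rw [hPdef, Commute.add_pow (Commute.one_left B) m, Finset.sum_mul]
      refine Finset.sum_congr rfl fun t ht => ?_
      rw [one_pow, one_mul, mul_assoc]
      rw [show ((m.choose t : Matrix n n ℝ)) * B ^ k = (m.choose t) • B ^ k from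
        (nsmul_eq_mul _ _).symm]
      rw [mul_smul_comm, ← pow_add]
    have hRmax : ∀ t : ℕ, t ≤ m → R ^ t ≤ max 1 R ^ m := by
      intro t ht
      calc R ^ t ≤ max 1 R ^ t := pow_le_pow_left₀ hR0 (le_max_right 1 R) t
      _ ≤ max 1 R ^ m := pow_le_pow_right₀ (le_max_left 1 R) ht
    calc β * S k ≤ Matrix.trace (P * B ^ k) := step3 k
    _ = ∑ t ∈ Finset.range (m + 1), (m.choose t : ℝ) * Matrix.trace (B ^ (m - t + k)) := by
        rw [hexp, Matrix.trace_sum]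
        refine Finset.sum_congr rfl fun t _ => ?_
        rw [Matrix.trace_smul, nsmul_eq_mul]
    _ ≤ ∑ t ∈ Finset.range (m + 1),
          (m.choose t : ℝ) * ((Fintype.card n : ℝ) * R ^ (m - t + k)) := by
        refine Finset.sum_le_sum fun t _ => ?_
        exact mul_le_mul_of_nonneg_left (trace_pow_le B _ (Nat.lt_of_lt_of_le hk (Nat.le_add_left k (m - t)))) (Nat.cast_nonneg _)
    _ ≤ ∑ t ∈ Finset.range (m + 1),
          (m.choose t : ℝ) * ((Fintype.card n : ℝ) * (max 1 R ^ m * R ^ k)) := by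
        refine Finset.sum_le_sum fun t _ => ?_
        apply mul_le_mul_of_nonneg_left ?_ (Nat.cast_nonneg _)
        apply mul_le_mul_of_nonneg_left ?_ (Nat.cast_nonneg _)
        rw [pow_add]
        exact mul_le_mul_of_nonneg_right (hRmax (m - t) (Nat.sub_le m t))
          (_root_.pow_nonneg hR0 k)
    _ = K * R ^ k := by rw [← Finset.sum_mul, hK]; ring
  -- combine and take the limit
  have hKY : 0 < K * Y := mul_pos hK0 hY0
  have keyk : ∀ k : ℕ, 0 < k → β * c * s ^ k ≤ (K * Y) * R ^ k := by
    intro k hk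
    have h1 := step2 k
    have h2 := step4 k hk
    have ha := mul_le_mul_of_nonneg_left h1 hβ0.le
    have hb := mul_le_mul_of_nonneg_right h2 hY0.le
    nlinarith [ha, hb]
  have hR0' : 0 < R := by
    by_contra hcontra
    push_neg at hcontra
    have h1 := keyk 1 one_pos
    rw [pow_one, pow_one] at h1
    have h2 : (K * Y) * R ≤ 0 := mul_nonpos_of_nonneg_of_nonpos hKY.le hcontra
    nlinarith [mul_pos (mul_pos hβ0 hc0) hs]
  have hrat : ∀ k : ℕ, 0 < k → β * c / (K * Y) ≤ (R / s) ^ k := by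
    intro k hk
    rw [div_pow, le_div_iff₀ (pow_pos hs k), div_mul_eq_mul_div, div_le_iff₀ hKY]
    calc β * c * s ^ k ≤ (K * Y) * R ^ k := keyk k hk
    _ = R ^ k * (K * Y) := by ring
  have hlim : Filter.Tendsto (fun k : ℕ => (R / s) ^ k) Filter.atTop (nhds 0) :=
    tendsto_pow_atTop_nhds_zero_of_lt_one (div_nonneg hR0 hs.le)
      ((div_lt_one hs).mpr hcon)
  have hpos : 0 < β * c / (K * Y) := div_pos (mul_pos hβ0 hc0) hKY
  obtain ⟨k, hklt, hk1⟩ :=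
    ((hlim.eventually_lt_const hpos).and (Filter.eventually_ge_atTop 1)).exists
  exact absurd (hrat k hk1) (not_le.mpr hklt)

end SprAux


/-- For a complex matrix `M` and an irreducible nonnegative matrix `B` of the same size with
`|M| ≤ B` entrywise and strict inequality in at least one entry, `spr(M) < spr(B)`. -/
theorem stmt10 {n : Type*} [Fintype n] [DecidableEq n]
    (M : Matrix n n ℂ) (B : Matrix n n ℝ)
    (hnn : ∀ i j, 0 ≤ B i j)
    (hirr : ∀ i j, ∃ k : ℕ, 0 < k ∧ 0 < (B ^ k) i j)
    (hle : ∀ i j, ‖M i j‖ ≤ B i j)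
    (hstrict : ∃ i j, ‖M i j‖ < B i j) :
    spr M < spr (B.map Complex.ofReal) := by
  obtain ⟨i₀, j₀, hij⟩ := hstrict
  have hne : Nonempty n := ⟨i₀⟩
  obtain ⟨μ, hμspec, hμabs⟩ := SprAux.exists_max_eig M
  -- extract an eigenvector
  have heig : Module.End.HasEigenvalue (Matrix.toLin' M) μ := by
    rw [← Matrix.toLin_eq_toLin']
    apply Module.End.hasEigenvalue_iff_mem_spectrum.mpr
    rwa [show (Matrix.toLin (Pi.basisFun ℂ n) (Pi.basisFun ℂ n)) M = (Matrix.toLinAlgEquiv (Pi.basisFun ℂ n)) M from rfl,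
      AlgEquiv.spectrum_eq (Matrix.toLinAlgEquiv (Pi.basisFun ℂ n)) M]
  obtain ⟨v, hv⟩ := heig.exists_hasEigenvector
  have hvne : v ≠ 0 := hv.right
  have hMv : M *ᵥ v = μ • v := by
    rw [← Matrix.toLin'_apply]; exact hv.apply_eq_smul
  set r := ‖μ‖ with hr
  have hr0 : 0 ≤ r := norm_nonneg μ
  set x : n → ℝ := fun i => ‖v i‖ with hx
  have hx0 : ∀ i, 0 ≤ x i := fun i => norm_nonneg _
  obtain ⟨jst, hjst⟩ : ∃ j, 0 < x j := by
    by_contra h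
    push_neg at h
    apply hvne
    funext j
    have h0 : x j = 0 := le_antisymm (h j) (hx0 j)
    simpa [hx, map_eq_zero] using h0
  have hrx : ∀ i, r * x i ≤ ∑ j, ‖M i j‖ * x j := by
    intro i
    calc r * x i = ‖μ * v i‖ := (norm_mul μ (v i)).symm
    _ = ‖(M *ᵥ v) i‖ := by rw [hMv]; simp
    _ = ‖∑ j, M i j * v j‖ := by simp [Matrix.mulVec, dotProduct]
    _ ≤ ∑ j, ‖M i j * v j‖ := norm_sum_le _ _
    _ = ∑ j, ‖M i j‖ * x j := by
        refine Finset.sum_congr rfl fun j _ => ?_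
        rw [norm_mul]
  have hBxe : ∀ i, (B *ᵥ x) i = ∑ j, B i j * x j := by
    intro i; simp [Matrix.mulVec, dotProduct]
  have hMB : ∀ i, ∑ j, ‖M i j‖ * x j ≤ ∑ j, B i j * x j := fun i =>
    Finset.sum_le_sum fun j _ => mul_le_mul_of_nonneg_right (hle i j) (hx0 j)
  have hxB : ∀ i, r * x i ≤ (B *ᵥ x) i := by
    intro i
    rw [hBxe i]
    exact (hrx i).trans (hMB i)
  -- the slack is nonzero somewhere
  have hzne : ∃ i, r * x i < (B *ᵥ x) i := by
    by_contra h
    push_neg at h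
    have heq : ∀ i, (B *ᵥ x) i = r * x i := fun i => le_antisymm (h i) (hxB i)
    have hj0 : x j₀ = 0 := by
      have heqi : ∑ j, B i₀ j * x j = r * x i₀ := by rw [← hBxe i₀]; exact heq i₀
      have hs2 : ∑ j, (B i₀ j - ‖M i₀ j‖) * x j = 0 := by
        have hsplit : ∑ j, (B i₀ j - ‖M i₀ j‖) * x j =
            (∑ j, B i₀ j * x j) - ∑ j, ‖M i₀ j‖ * x j := by
          rw [← Finset.sum_sub_distrib]
          exact Finset.sum_congr rfl fun j _ => by ring
        rw [hsplit]
        have := hrx i₀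
        have := hMB i₀
        linarith
      have hterm := (Finset.sum_eq_zero_iff_of_nonneg
        (fun j _ => mul_nonneg (sub_nonneg.mpr (hle i₀ j)) (hx0 j))).mp hs2 j₀
        (Finset.mem_univ j₀)
      rcases mul_eq_zero.mp hterm with h1 | h2
      · exact absurd h1 (ne_of_gt (sub_pos.mpr hij))
      · exact h2
    have hBxr : B *ᵥ x = r • x := by
      funext i; rw [heq i]; simp
    have hiter : ∀ k : ℕ, (B ^ k) *ᵥ x = (r ^ k) • x := by
      intro k
      induction k with
      | zero => simp [Matrix.one_mulVec]
      | succ k ih =>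
        rw [pow_succ, ← Matrix.mulVec_mulVec, hBxr, Matrix.mulVec_smul, ih, smul_smul,
          pow_succ, mul_comm]
    obtain ⟨k, hk0, hkpos⟩ := hirr j₀ jst
    have h4 : ((B ^ k) *ᵥ x) j₀ = 0 := by rw [hiter k]; simp [hj0]
    have h5 : 0 < ((B ^ k) *ᵥ x) j₀ := by
      have : ((B ^ k) *ᵥ x) j₀ = ∑ j, (B ^ k) j₀ j * x j := by
        simp [Matrix.mulVec, dotProduct]
      rw [this]
      calc (0:ℝ) < (B ^ k) j₀ jst * x jst := mul_pos hkpos hjst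
      _ ≤ ∑ j, (B ^ k) j₀ j * x j :=
          Finset.single_le_sum (f := fun j => (B ^ k) j₀ j * x j)
            (fun j _ => mul_nonneg (SprAux.pow_nonneg B hnn k j₀ j) (hx0 j))
            (Finset.mem_univ jst)
    rw [h4] at h5
    exact lt_irrefl 0 h5
  obtain ⟨istar, histar⟩ := hzne
  -- boost with the positive power of 1 + B
  obtain ⟨m, hP⟩ := SprAux.exists_pos_pow B hnn hirr
  set P := (1 + B) ^ m with hPdef
  have hPnn : ∀ i j, 0 ≤ P i j := fun i j => (hP i j).le
  set z : n → ℝ := fun i => (B *ᵥ x) i - r * x i with hz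
  have hz0 : ∀ i, 0 ≤ z i := fun i => sub_nonneg.mpr (hxB i)
  set y := P *ᵥ x with hy
  set w := P *ᵥ z with hw
  have hposvec : ∀ (u : n → ℝ), (∀ i, 0 ≤ u i) → ∀ j₁, 0 < u j₁ → ∀ i, 0 < (P *ᵥ u) i := by
    intro u hu j₁ hj₁ i
    have : (P *ᵥ u) i = ∑ j, P i j * u j := by simp [Matrix.mulVec, dotProduct]
    rw [this]
    calc (0:ℝ) < P i j₁ * u j₁ := mul_pos (hP i j₁) hj₁
    _ ≤ ∑ j, P i j * u j :=
        Finset.single_le_sum (f := fun j => P i j * u j)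
          (fun j _ => mul_nonneg (hPnn i j) (hu j)) (Finset.mem_univ j₁)
  have hy0 : ∀ i, 0 < y i := hposvec x hx0 jst hjst
  have hw0 : ∀ i, 0 < w i := hposvec z hz0 istar (sub_pos.mpr histar)
  have hcomm : B * P = P * B := by
    have : Commute B (1 + B) := (Commute.one_right B).add_right (Commute.refl B)
    exact (this.pow_right m).eq
  have hBy : ∀ i, r * y i + w i = (B *ᵥ y) i := by
    have h1 : B *ᵥ y = P *ᵥ (B *ᵥ x) := by
      rw [hy, Matrix.mulVec_mulVec, Matrix.mulVec_mulVec, hcomm]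
    have h2 : w = P *ᵥ (B *ᵥ x) - r • (P *ᵥ x) := by
      have hzeq : z = (B *ᵥ x) - r • x := by
        funext i; simp [hz, Pi.sub_apply]
      rw [hw, hzeq, Matrix.mulVec_sub, Matrix.mulVec_smul]
    intro i
    have := congrFun h2 i
    simp only [Pi.sub_apply, Pi.smul_apply, smul_eq_mul] at this
    rw [h1]
    simp only [hy] at this ⊢
    linarith [this]
  obtain ⟨imin, -, hmin⟩ := Finset.exists_min_image Finset.univ (fun i => w i / y i)
    Finset.univ_nonempty
  set ε := w imin / y imin with hε
  have hε0 : 0 < ε := div_pos (hw0 imin) (hy0 imin)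
  have hsubinv : ∀ i, (r + ε) * y i ≤ (B *ᵥ y) i := by
    intro i
    have h1 : ε ≤ w i / y i := hmin i (Finset.mem_univ i)
    have h2 : ε * y i ≤ w i := (le_div_iff₀ (hy0 i)).mp h1
    have h3 := hBy i
    nlinarith [h2, h3]
  have final := SprAux.le_spr_of_subinvariant B hnn hirr
    (by linarith : (0:ℝ) < r + ε) hy0 hsubinv
  calc spr M = r := hμabs.symm
  _ < r + ε := by linarith
  _ ≤ spr (B.map Complex.ofReal) := final
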